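/- For all n ≥ 1, [.w_n l_{n+1}] = T^{2^n}([.w_{n+1} l_{n+1}]), and [.w_{n+1} l_n] = T^{2^{n+1}}([.w_{n+2} l_n]) ⊔ T^{3·2^n}([.w_{n+2} l_n]) (disjoint union). -/

import Mathlib

inductive A : Type
  | a | b | c | d
deriving DecidableEq

def subst : A → List A
  | A.a => [A.a, A.c, A.a]
  | A.b => [A.d]
  | A.c => [A.b]
  | A.d => [A.c]

def substW (u : List A) : List A := u.flatMap subst

def wrd (n : ℕ) : List A := substW^[n - 1] [A.a]

def ltr (n : ℕ) : List A := substW^[n - 1] [A.c]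

def seg (ξ : ℕ → A) (s m : ℕ) : List A := (List.range m).map fun i => ξ (s + 1 + i)

def IsFixed (ξ : ℕ → A) : Prop :=
  ∀ N : ℕ, seg ξ 0 ((substW (seg ξ 0 N)).length) = substW (seg ξ 0 N)

/-- The phase space of the subshift: bi-infinite sequences all of whose finite
factors occur in the fixed point `ξ`. -/
def Omega (ξ : ℕ → A) : Set (ℤ → A) :=
  {ω | ∀ (s : ℤ) (m : ℕ), ∃ t : ℕ,
    seg ξ t m = (List.range m).map fun i => ω (s + 1 + (i : ℤ))}

/-- The `N`-th power of the shift map `T`. -/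
def shiftN (N : ℤ) (ω : ℤ → A) : ℤ → A := fun i => ω (i + N)

/-- The cylinder `[u.v]` inside `Omega ξ`. -/
def cyl (ξ : ℕ → A) (u v : List A) : Set (ℤ → A) :=
  {ω | ω ∈ Omega ξ ∧
    (List.range u.length).map (fun i => ω (1 + (i : ℤ) - u.length)) = u ∧
    (List.range v.length).map (fun i => ω (1 + (i : ℤ))) = v}

/-- The cylinder `[.v]` with empty past word. -/
def cylF (ξ : ℕ → A) (v : List A) : Set (ℤ → A) := cyl ξ [] v

def tau : A → A
  | A.a => A.c
  | A.c => A.b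
  | A.b => A.d
  | A.d => A.c

def LkF (k : ℕ) : A := tau^[k] A.a

lemma LkF_succ (k : ℕ) : LkF (k + 1) = tau (LkF k) :=
  Function.iterate_succ_apply' tau k A.a

lemma LkF_mod3 (k : ℕ) :
    LkF (k + 1) = if k % 3 = 0 then A.c else if k % 3 = 1 then A.b else A.d := by
  induction k with
  | zero => rfl
  | succ k ih =>
    rw [LkF_succ, ih]
    have h : k % 3 = 0 ∨ k % 3 = 1 ∨ k % 3 = 2 := by omega
    rcases h with h | h | h
    · have h1 : (k + 1) % 3 = 1 := by omega
      rw [h, h1]; rfl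
    · have h1 : (k + 1) % 3 = 2 := by omega
      rw [h, h1]; rfl
    · have h1 : (k + 1) % 3 = 0 := by omega
      rw [h, h1]; rfl

lemma LkF_ne_succ (k : ℕ) : LkF (k + 1) ≠ LkF k := by
  cases k with
  | zero => decide
  | succ k =>
    rw [LkF_mod3 k, LkF_mod3 (k+1)]
    have h : k % 3 = 0 ∨ k % 3 = 1 ∨ k % 3 = 2 := by omega
    rcases h with h | h | h <;>
      [ (have h1 : (k+1) % 3 = 1 := by omega) ;
        (have h1 : (k+1) % 3 = 2 := by omega) ;
        (have h1 : (k+1) % 3 = 0 := by omega) ] <;>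
      rw [h, h1] <;> decide

lemma LkF_ne_two (k : ℕ) : LkF (k + 2) ≠ LkF k := by
  cases k with
  | zero => decide
  | succ k =>
    rw [LkF_mod3 k, LkF_mod3 (k+2)]
    have h : k % 3 = 0 ∨ k % 3 = 1 ∨ k % 3 = 2 := by omega
    rcases h with h | h | h <;>
      [ (have h1 : (k+2) % 3 = 2 := by omega) ;
        (have h1 : (k+2) % 3 = 0 := by omega) ;
        (have h1 : (k+2) % 3 = 1 := by omega) ] <;>
      rw [h, h1] <;> decide

lemma LkF_ne_a (k : ℕ) : LkF (k + 1) ≠ A.a := by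
  rw [LkF_mod3 k]
  have h : k % 3 = 0 ∨ k % 3 = 1 ∨ k % 3 = 2 := by omega
  rcases h with h | h | h <;> rw [h] <;> decide

def g (m : ℕ) : A := LkF (padicValNat 2 m)

lemma g_pow (k u : ℕ) (hu : u % 2 = 1) : g (2 ^ k * u) = LkF k := by
  unfold g
  congr 1
  have hu0 : u ≠ 0 := by omega
  have h2 : ¬ (2 ∣ u) := by omega
  haveI : Fact (Nat.Prime 2) := ⟨Nat.prime_two⟩
  rw [padicValNat.mul (by positivity) hu0, padicValNat.prime_pow,
    padicValNat.eq_zero_of_not_dvd h2]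
  omega

lemma g_odd (m : ℕ) (hm : m % 2 = 1) : g m = A.a := by
  have := g_pow 0 m hm
  simpa [LkF] using this

lemma odd_part : ∀ m : ℕ, m ≠ 0 → ∃ k u, u % 2 = 1 ∧ m = 2 ^ k * u := by
  intro m
  induction m using Nat.strong_induction_on with
  | _ m ih =>
    intro hm
    rcases Nat.even_or_odd m with he | ho
    · obtain ⟨t, ht⟩ := he
      have ht0 : t ≠ 0 := by omega
      obtain ⟨k, u, hu, h⟩ := ih t (by omega) ht0
      exact ⟨k + 1, u, hu, by rw [ht, h]; ring⟩
    · exact ⟨0, m, Nat.odd_iff.mp ho, by ring⟩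

lemma g_period (K t i : ℕ) (h1 : 1 ≤ i) (h2 : i < 2 ^ K) :
    g (2 ^ K * t + i) = g i := by
  obtain ⟨k, u, hu, rfl⟩ := odd_part i (by omega)
  have hkK : k < K := by
    have h2k : 2 ^ k ≤ 2 ^ k * u := Nat.le_mul_of_pos_right _ (by omega)
    have : 2 ^ k < 2 ^ K := lt_of_le_of_lt h2k h2
    exact (Nat.pow_lt_pow_iff_right (by norm_num)).mp this
  have hE : 2 ^ K * t + 2 ^ k * u = 2 ^ k * (2 ^ (K - k) * t + u) := by
    rw [Nat.mul_add]
    congr 1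
    rw [← Nat.mul_assoc, ← Nat.pow_add]
    congr 2
    omega
  have hpar : (2 ^ (K - k) * t + u) % 2 = 1 := by
    obtain ⟨j, hj⟩ : ∃ j, K - k = j + 1 := ⟨K - k - 1, by omega⟩
    have : 2 ^ (K - k) * t = 2 * (2 ^ j * t) := by rw [hj, pow_succ]; ring
    omega
  rw [hE, g_pow _ _ hpar, g_pow _ _ hu]

lemma divStep (k P : ℕ) (h2 : 2 ^ k ∣ P)
    (hA : g (P + 2 ^ k) = g (2 ^ k)) (hB : g (P + 3 * 2 ^ k) = g (3 * 2 ^ k)) :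
    2 ^ (k + 1) ∣ P := by
  obtain ⟨q, hq⟩ := h2
  rcases Nat.even_or_odd q with he | ho
  · obtain ⟨t, ht⟩ := he
    exact ⟨t, by rw [hq, ht, pow_succ]; ring⟩
  · exfalso
    have hqo : q % 2 = 1 := Nat.odd_iff.mp ho
    have hgk : g (2 ^ k) = LkF k := by
      have := g_pow k 1 (by norm_num); simpa using this
    have hg3 : g (3 * 2 ^ k) = LkF k := by
      rw [mul_comm]; exact g_pow k 3 (by norm_num)
    set r := (q + 1) / 2 with hr
    have hq1 : q + 1 = 2 * r := by omega
    rcases Nat.even_or_odd r with hre | hro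
    · -- r even, use B : q + 3 = 2*(r+1), r+1 odd
      have hq3 : q + 3 = 2 * (r + 1) := by omega
      have h1 : P + 3 * 2 ^ k = 2 ^ (k + 1) * (r + 1) := by
        have : P + 3 * 2 ^ k = 2 ^ k * (q + 3) := by rw [hq]; ring
        rw [this, hq3, pow_succ]; ring
      have : g (P + 3 * 2 ^ k) = LkF (k + 1) := by
        rw [h1, g_pow _ _ (by have := Nat.even_iff.mp hre; omega)]
      rw [hB, hg3] at this
      exact LkF_ne_succ k this.symm
    · have h1 : P + 2 ^ k = 2 ^ (k + 1) * r := by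
        have : P + 2 ^ k = 2 ^ k * (q + 1) := by rw [hq]; ring
        rw [this, hq1, pow_succ]; ring
      have : g (P + 2 ^ k) = LkF (k + 1) := by
        rw [h1, g_pow _ _ (Nat.odd_iff.mp hro)]
      rw [hA, hgk] at this
      exact LkF_ne_succ k this.symm

lemma divChain : ∀ (n : ℕ) (P : ℕ),
    (∀ j, 1 ≤ j → j < 2 ^ (n + 1) → g (P + j) = g j) → 2 ^ n ∣ P := by
  intro n
  induction n with
  | zero => intro P _; exact one_dvd P
  | succ n ih =>
    intro P h
    have hd : 2 ^ n ∣ P := ih P (fun j hj1 hj2 =>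
      h j hj1 (lt_of_lt_of_le hj2 (Nat.pow_le_pow_right (by norm_num) (by omega))))
    refine divStep n P hd ?_ ?_
    · exact h (2 ^ n) (Nat.one_le_two_pow) (by
        have : (2:ℕ) ^ (n+2) = 4 * 2 ^ n := by ring
        omega)
    · exact h (3 * 2 ^ n) (by have := Nat.one_le_two_pow (n := n); omega) (by
        have : (2:ℕ) ^ (n+2) = 4 * 2 ^ n := by ring
        omega)
-- key lemmas, appended after infra1
lemma key1 (k P : ℕ)
    (hw : ∀ j, 1 ≤ j → j < 2 ^ (k + 1) → g (P + j) = g j)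
    (hx : g (P + 2 ^ (k + 1)) = LkF (k + 2)) :
    ∃ r, r % 2 = 1 ∧ P = 2 ^ (k + 1) * r := by
  have hd : 2 ^ k ∣ P := divChain k P hw
  obtain ⟨q, hq⟩ := hd
  rcases Nat.even_or_odd q with he | ho
  · obtain ⟨q', hq'⟩ := he
    have hP' : P = 2 ^ (k + 1) * q' := by rw [hq, hq', pow_succ]; ring
    rcases Nat.even_or_odd q' with he' | ho'
    · exfalso
      have h1 : P + 2 ^ (k + 1) = 2 ^ (k + 1) * (q' + 1) := by rw [hP']; ring
      have : g (P + 2 ^ (k + 1)) = LkF (k + 1) := by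
        rw [h1, g_pow _ _ (by have := Nat.even_iff.mp he'; omega)]
      rw [hx] at this
      exact LkF_ne_succ (k + 1) this
    · exact ⟨q', Nat.odd_iff.mp ho', hP'⟩
  · exfalso
    have hqo := Nat.odd_iff.mp ho
    have h1 : P + 2 ^ (k + 1) = 2 ^ k * (q + 2) := by rw [hq, pow_succ]; ring
    have : g (P + 2 ^ (k + 1)) = LkF k := by
      rw [h1, g_pow _ _ (by omega)]
    rw [hx] at this
    exact LkF_ne_two k this

lemma key2 (n P : ℕ)
    (hw : ∀ j, 1 ≤ j → j < 2 ^ (n + 1) → g (P + j) = g j)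
    (hx : g (P + 2 ^ (n + 1)) = LkF n) :
    (∃ r, r % 4 = 3 ∧ P = 2 ^ (n + 1) * r) ∨ (∃ s, P = 2 ^ n * (8 * s + 7)) := by
  have hd : 2 ^ n ∣ P := divChain n P hw
  obtain ⟨q, hq⟩ := hd
  have hmid : g (P + 2 ^ n) = LkF n := by
    have h2 : (2:ℕ) ^ (n + 1) = 2 * 2 ^ n := by ring
    have hp1 : (1:ℕ) ≤ 2 ^ n := Nat.one_le_two_pow
    have := hw (2 ^ n) Nat.one_le_two_pow (by omega)
    rw [this]
    have := g_pow n 1 (by norm_num); simpa using this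
  rcases Nat.even_or_odd q with he | ho
  · -- left case
    obtain ⟨r, hr⟩ := he
    have hP' : P = 2 ^ (n + 1) * r := by rw [hq, hr, pow_succ]; ring
    left
    obtain ⟨e, u, hu, heu⟩ := odd_part (r + 1) (by omega)
    have hg : g (P + 2 ^ (n + 1)) = LkF (n + 1 + e) := by
      have h1 : P + 2 ^ (n + 1) = 2 ^ (n + 1 + e) * u := by
        rw [hP']
        have : 2 ^ (n+1) * r + 2 ^ (n+1) = 2 ^ (n+1) * (r + 1) := by ring
        rw [this, heu, pow_add]; ring
      rw [h1, g_pow _ _ hu]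
    rw [hx] at hg
    have he0 : e ≠ 0 := by
      intro h0
      rw [h0] at hg
      exact LkF_ne_succ n (by simpa using hg.symm)
    have he1 : e ≠ 1 := by
      intro h0
      rw [h0] at hg
      exact LkF_ne_two n (by simpa using hg.symm)
    have : 4 ∣ r + 1 := by
      obtain ⟨e', he'⟩ : ∃ e', e = e' + 2 := ⟨e - 2, by omega⟩
      exact ⟨2 ^ e' * u, by rw [heu, he', pow_add]; ring⟩
    exact ⟨r, by omega, hP'⟩
  · -- right case
    right
    have hqo := Nat.odd_iff.mp ho
    obtain ⟨e, u, hu, heu⟩ := odd_part (q + 1) (by omega)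
    have hg : g (P + 2 ^ n) = LkF (n + e) := by
      have h1 : P + 2 ^ n = 2 ^ (n + e) * u := by
        rw [hq]
        have : 2 ^ n * q + 2 ^ n = 2 ^ n * (q + 1) := by ring
        rw [this, heu, pow_add]; ring
      rw [h1, g_pow _ _ hu]
    rw [hmid] at hg
    have he0 : e ≠ 0 := by
      intro h0
      rw [h0] at heu
      simp at heu
      omega
    have he1 : e ≠ 1 := by
      intro h0
      rw [h0] at hg
      exact LkF_ne_succ n hg.symm
    have he2 : e ≠ 2 := by
      intro h0
      rw [h0] at hg
      exact LkF_ne_two n hg.symm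
    have h8 : 8 ∣ q + 1 := by
      obtain ⟨e', he'⟩ : ∃ e', e = e' + 3 := ⟨e - 3, by omega⟩
      exact ⟨2 ^ e' * u, by rw [heu, he']; ring⟩
    obtain ⟨s, hs⟩ : ∃ s, q = 8 * s + 7 := ⟨(q - 7) / 8, by omega⟩
    exact ⟨s, by rw [hq, hs]⟩

lemma key3 (n P : ℕ)
    (hw : ∀ j, 1 ≤ j → j < 2 ^ (n + 2) → g (P + j) = g j)
    (hx : g (P + 2 ^ (n + 2)) = LkF n) :
    ∀ j, 1 ≤ j → j < 2 ^ (n + 2) → g (P + 2 ^ (n + 2) + j) = g j := by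
  have hd : 2 ^ (n + 1) ∣ P := divChain (n + 1) P hw
  obtain ⟨m, hm⟩ := hd
  rcases Nat.even_or_odd m with he | ho
  · obtain ⟨m', hm'⟩ := he
    have h1 : P + 2 ^ (n + 2) = 2 ^ (n + 2) * (m' + 1) := by
      rw [hm, hm', pow_succ]; ring
    intro j hj1 hj2
    have h2 : P + 2 ^ (n + 2) + j = 2 ^ (n + 2) * (m' + 1) + j := by omega
    rw [h2, g_period _ _ _ hj1 hj2]
  · exfalso
    have hmo := Nat.odd_iff.mp ho
    have h1 : P + 2 ^ (n + 2) = 2 ^ (n + 1) * (m + 2) := by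
      rw [hm, pow_succ]; ring
    have : g (P + 2 ^ (n + 2)) = LkF (n + 1) := by
      rw [h1, g_pow _ _ (by omega)]
    rw [hx] at this
    exact LkF_ne_succ n this.symm
-- ==== the fixed point and lists ====

def gpre (m : ℕ) : List A := (List.range m).map fun i => g (i + 1)

lemma gpre_length (m : ℕ) : (gpre m).length = m := by simp [gpre]

lemma gpre_succ (m : ℕ) : gpre (m + 1) = gpre m ++ [g (m + 1)] := by
  simp [gpre, List.range_succ]

lemma substW_append (l1 l2 : List A) : substW (l1 ++ l2) = substW l1 ++ substW l2 := by
  simp [substW]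

lemma tau_ne_a (x : A) : tau x ≠ A.a := by cases x <;> decide

lemma subst_of_ne (x : A) (h : x ≠ A.a) : subst x = [tau x] := by
  cases x
  · exact absurd rfl h
  · rfl
  · rfl
  · rfl

lemma g_two_mul (m : ℕ) (h : m ≠ 0) : g (2 * m) = tau (g m) := by
  obtain ⟨k, u, hu, rfl⟩ := odd_part m h
  have h1 : 2 * (2 ^ k * u) = 2 ^ (k + 1) * u := by rw [pow_succ]; ring
  rw [h1, g_pow _ _ hu, g_pow _ _ hu, LkF_succ]

lemma g_ne_a_of_even (m : ℕ) (h : m % 2 = 0) (h0 : m ≠ 0) : g m ≠ A.a := by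
  obtain ⟨m', rfl⟩ : ∃ m', m = 2 * m' := ⟨m / 2, by omega⟩
  rw [g_two_mul m' (by omega)]
  exact tau_ne_a _

lemma substW_gpre (m : ℕ) : substW (gpre m) = gpre (2 * m + m % 2) := by
  induction m with
  | zero => rfl
  | succ m ih =>
    rw [gpre_succ, substW_append, ih]
    rcases Nat.even_or_odd m with he | ho
    · have hm0 : m % 2 = 0 := Nat.even_iff.mp he
      have h1 : (m + 1) % 2 = 1 := by omega
      have e1 : 2 * (m + 1) + (m + 1) % 2 = (2 * m + 2) + 1 := by omega
      have e0 : 2 * m + m % 2 = 2 * m := by omega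
      rw [e1, e0, gpre_succ, gpre_succ, gpre_succ]
      have v1 : g (2 * m + 1) = A.a := g_odd _ (by omega)
      have v2 : g (2 * m + 2) = A.c := by
        have : 2 * m + 2 = 2 * (m + 1) := by ring
        rw [this, g_two_mul _ (by omega), g_odd _ h1]
        rfl
      have v3 : g (2 * m + 2 + 1) = A.a := g_odd _ (by omega)
      rw [g_odd _ h1, v1, v2, v3]
      simp [substW, subst]
    · have hm1 : m % 2 = 1 := Nat.odd_iff.mp ho
      have h1 : (m + 1) % 2 = 0 := by omega
      have e1 : 2 * (m + 1) + (m + 1) % 2 = (2 * m + 1) + 1 := by omega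
      have e0 : 2 * m + m % 2 = 2 * m + 1 := by omega
      rw [e1, e0]
      have v2 : g (2 * m + 1 + 1) = tau (g (m + 1)) := by
        have h5 : 2 * m + 1 + 1 = 2 * (m + 1) := by ring
        rw [h5, g_two_mul _ (by omega)]
      have hne : g (m + 1) ≠ A.a := g_ne_a_of_even _ h1 (by omega)
      have h6 : substW [g (m + 1)] = [tau (g (m + 1))] := by
        simp [substW, subst_of_ne _ hne]
      rw [h6, gpre_succ (2 * m + 1), v2]

section Xi

variable (ξ : ℕ → A) (hξ : IsFixed ξ)

include hξ

lemma xi_one : ξ 1 = A.a := by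
  have h := hξ 1
  have h1 : seg ξ 0 1 = [ξ 1] := by simp [seg, List.range_succ]
  rw [h1] at h
  cases hx : ξ 1
  · rfl
  all_goals
    rw [hx] at h
    simp [substW, subst] at h
    rw [h1, hx] at h
    simp at h

lemma pref_one : seg ξ 0 1 = gpre 1 := by
  have h1 : seg ξ 0 1 = [ξ 1] := by simp [seg, List.range_succ]
  have h2 : gpre 1 = [g 1] := by simp [gpre, List.range_succ]
  rw [h1, h2, xi_one ξ hξ, g_odd 1 (by norm_num)]

lemma pref_step (m : ℕ) (hm : seg ξ 0 m = gpre m) :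
    seg ξ 0 (2 * m + m % 2) = gpre (2 * m + m % 2) := by
  have h := hξ m
  rw [hm, substW_gpre, gpre_length] at h
  exact h

lemma pref_all (j : ℕ) : ∃ m, j + 1 ≤ m ∧ seg ξ 0 m = gpre m := by
  induction j with
  | zero => exact ⟨1, le_refl _, pref_one ξ hξ⟩
  | succ j ih =>
    obtain ⟨m, hm1, hm2⟩ := ih
    exact ⟨2 * m + m % 2, by omega, pref_step ξ hξ m hm2⟩

lemma xi_eq (m : ℕ) (hm : 1 ≤ m) : ξ m = g m := by
  obtain ⟨M, hM1, hM2⟩ := pref_all ξ hξ m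
  have hlt : m - 1 < M := by omega
  have h3 := congrArg (fun l => l[m-1]?) hM2
  simp only [seg, gpre, List.getElem?_map, List.getElem?_range hlt, Option.map_some] at h3
  have e1 : 0 + 1 + (m - 1) = m := by omega
  have e2 : (m - 1) + 1 = m := by omega
  rw [e1, e2] at h3
  exact Option.some.inj h3

lemma window (ω : ℤ → A) (hω : ω ∈ Omega ξ) (a m : ℕ) :
    ∃ t : ℕ, ∀ i : ℕ, 1 ≤ i → i ≤ m → ω ((i : ℤ) - (a : ℤ)) = g (t + i) := by
  obtain ⟨t, ht⟩ := hω (-(a : ℤ)) m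
  refine ⟨t, fun i hi1 hi2 => ?_⟩
  have hlt : i - 1 < m := by omega
  have h3 := congrArg (fun l => l[i-1]?) ht
  simp only [seg, List.bind_eq_flatMap, List.pure_def, ← List.map_eq_flatMap, List.map_map,
    List.getElem?_map, List.getElem?_range hlt, Option.map_some, Function.comp_apply] at h3
  have h4 := Option.some.inj h3
  have e1 : ξ (t + 1 + (i - 1)) = g (t + i) := by
    rw [xi_eq ξ hξ _ (by omega)]
    congr 1
    omega
  have e2 : (-(a:ℤ) + 1 + ((i - 1 : ℕ) : ℤ)) = (i : ℤ) - (a : ℤ) := by omega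
  rw [e1, e2] at h4
  exact h4.symm

end Xi

lemma wrd_eq (n : ℕ) : wrd (n + 1) = gpre (2 ^ (n + 1) - 1) := by
  induction n with
  | zero =>
    show [A.a] = gpre 1
    have : gpre 1 = [g 1] := by simp [gpre, List.range_succ]
    rw [this, g_odd 1 (by norm_num)]
  | succ n ih =>
    have h1 : wrd (n + 2) = substW (wrd (n + 1)) := by
      show substW^[n + 1] [A.a] = substW (substW^[n] [A.a])
      rw [Function.iterate_succ_apply']
    have hodd : (2 ^ (n + 1) - 1) % 2 = 1 := by
      have h2 : (2:ℕ) ^ (n + 1) = 2 * 2 ^ n := by ring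
      have hp1 : (1:ℕ) ≤ 2 ^ n := Nat.one_le_two_pow
      omega
    rw [h1, ih, substW_gpre, hodd]
    congr 1
    have h2 : (2:ℕ) ^ (n + 2) = 2 * 2 ^ (n+1) := by ring
    have hp1 : (1:ℕ) ≤ 2 ^ (n+1) := Nat.one_le_two_pow
    omega

lemma ltr_eq (n : ℕ) : ltr (n + 1) = [LkF (n + 1)] := by
  induction n with
  | zero => rfl
  | succ n ih =>
    have h1 : ltr (n + 2) = substW (ltr (n + 1)) := by
      show substW^[n + 1] [A.c] = substW (substW^[n] [A.c])
      rw [Function.iterate_succ_apply']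
    rw [h1, ih]
    have hne : LkF (n + 1) ≠ A.a := LkF_ne_a n
    have : substW [LkF (n + 1)] = [tau (LkF (n + 1))] := by
      simp [substW, subst_of_ne _ hne]
    rw [this, ← LkF_succ]
-- ==== shift and cylinder membership ====

lemma omega_shift (ξ : ℕ → A) (N : ℤ) (ω : ℤ → A) (hω : ω ∈ Omega ξ) :
    shiftN N ω ∈ Omega ξ := by
  intro s m
  obtain ⟨t, ht⟩ := hω (s + N) m
  refine ⟨t, ht.trans ?_⟩
  apply List.map_congr_left
  intro i _
  show ω (s + N + 1 + i) = shiftN N ω (s + 1 + i)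
  unfold shiftN
  congr 1
  ring

lemma shift_shift (N : ℤ) (ω : ℤ → A) : shiftN N (shiftN (-N) ω) = ω := by
  funext z
  simp [shiftN]

lemma mem_cylF_iff (ξ : ℕ → A) (M : ℕ) (x : A) (ω : ℤ → A) :
    ω ∈ cylF ξ (gpre M ++ [x]) ↔
      ω ∈ Omega ξ ∧ (∀ i : ℕ, 1 ≤ i → i ≤ M → ω (i : ℤ) = g i) ∧ ω ((M : ℤ) + 1) = x := by
  have hlen : (gpre M ++ [x]).length = M + 1 := by simp [gpre]
  constructor
  · rintro ⟨hO, -, hf⟩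
    rw [hlen] at hf
    refine ⟨hO, ?_, ?_⟩
    · intro i h1 h2
      have hlt : i - 1 < M + 1 := by omega
      have h3 := congrArg (fun l => l[i-1]?) hf
      simp only [List.bind_eq_flatMap, List.pure_def, ← List.map_eq_flatMap, List.map_map,
        List.getElem?_map, List.getElem?_range hlt, Option.map_some, Function.comp_apply] at h3
      rw [List.getElem?_append_left (by rw [gpre_length]; omega)] at h3
      have hmlt : i - 1 < M := by omega
      simp only [gpre, List.getElem?_map, List.getElem?_range hmlt, Option.map_some] at h3
      have h4 := Option.some.inj h3
      have e1 : (1 : ℤ) + ((i - 1 : ℕ) : ℤ) = (i : ℤ) := by omega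
      have e2 : (i - 1) + 1 = i := by omega
      rw [e1, e2] at h4
      exact h4
    · have hlt : M < M + 1 := by omega
      have h3 := congrArg (fun l => l[M]?) hf
      simp only [List.bind_eq_flatMap, List.pure_def, ← List.map_eq_flatMap, List.map_map,
        List.getElem?_map, List.getElem?_range hlt, Option.map_some, Function.comp_apply] at h3
      rw [List.getElem?_append_right (by rw [gpre_length])] at h3
      rw [gpre_length, Nat.sub_self] at h3
      simp only [List.getElem?_cons_zero] at h3
      have h4 := Option.some.inj h3
      rw [show (1 : ℤ) + (M : ℤ) = (M : ℤ) + 1 by ring] at h4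
      exact h4
  · rintro ⟨hO, hm, hx⟩
    refine ⟨hO, by simp, ?_⟩
    rw [hlen]
    apply List.ext_getElem
    · simp [gpre, List.bind_eq_flatMap, List.pure_def, ← List.map_eq_flatMap]
    · intro i hi1 hi2
      rw [hlen] at hi2
      simp only [List.bind_eq_flatMap, List.pure_def, ← List.map_eq_flatMap, List.map_map,
        List.getElem_map, List.getElem_range, Function.comp_apply]
      rcases Nat.lt_or_ge i M with hiM | hiM
      · rw [List.getElem_append_left (by rw [gpre_length]; omega)]
        simp only [gpre, List.getElem_map, List.getElem_range]
        have h5 := hm (i + 1) (by omega) (by omega)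
        have e1 : ((i + 1 : ℕ) : ℤ) = 1 + (i : ℤ) := by omega
        rw [e1] at h5
        exact h5
      · have hieq : i = M := by omega
        subst hieq
        rw [List.getElem_append_right (by rw [gpre_length])]
        simp only [gpre_length, Nat.sub_self, List.getElem_cons_zero]
        rw [show (1 : ℤ) + (i : ℤ) = (i : ℤ) + 1 by ring]
        exact hx
theorem stmt16 (ξ : ℕ → A) (hξ : IsFixed ξ) :
    ∀ n : ℕ, 1 ≤ n →
      cylF ξ (wrd n ++ ltr (n + 1)) =
        shiftN (2 ^ n : ℤ) '' cylF ξ (wrd (n + 1) ++ ltr (n + 1)) ∧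
      cylF ξ (wrd (n + 1) ++ ltr n) =
        shiftN (2 ^ (n + 1) : ℤ) '' cylF ξ (wrd (n + 2) ++ ltr n) ∪
          shiftN (3 * 2 ^ n : ℤ) '' cylF ξ (wrd (n + 2) ++ ltr n) ∧
      Disjoint (shiftN (2 ^ (n + 1) : ℤ) '' cylF ξ (wrd (n + 2) ++ ltr n))
        (shiftN (3 * 2 ^ n : ℤ) '' cylF ξ (wrd (n + 2) ++ ltr n)) := by
  intro n hn
  obtain ⟨k, rfl⟩ : ∃ k, n = k + 1 := ⟨n - 1, by omega⟩
  have pB : (1:ℕ) ≤ 2 ^ k := Nat.one_le_two_pow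
  set B : ℕ := 2 ^ k with hB
  have e1 : (2:ℕ) ^ (k + 1) = 2 * B := by rw [hB]; ring
  have e2 : (2:ℕ) ^ (k + 1 + 1) = 4 * B := by rw [hB]; ring
  have e2' : (2:ℕ) ^ (k + 2) = 4 * B := by rw [hB]; ring
  have e3 : (2:ℕ) ^ (k + 3) = 8 * B := by rw [hB]; ring
  have e3' : (2:ℕ) ^ (k + 1 + 2) = 8 * B := by rw [hB]; ring
  have z1 : (2:ℤ) ^ (k + 1) = 2 * (B:ℤ) := by exact_mod_cast e1
  have z2 : (2:ℤ) ^ (k + 1 + 1) = 4 * (B:ℤ) := by exact_mod_cast e2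
  have z3 : 3 * (2:ℤ) ^ (k + 1) = 6 * (B:ℤ) := by rw [z1]; ring
  have per : ∀ (X i K t : ℕ), X = 2^K * t + i → 1 ≤ i → i < 2^K → g X = g i :=
    fun X i K t hX h1 h2 => by rw [hX]; exact g_period K t i h1 h2
  have W1 : wrd (k+1) = gpre (2*B - 1) := by rw [wrd_eq k, e1]
  have W2 : wrd (k+1+1) = gpre (4*B - 1) := by rw [wrd_eq (k+1), e2]
  have W3 : wrd (k+1+2) = gpre (8*B - 1) := by
    have h := wrd_eq (k+2)
    rw [show (2:ℕ)^(k+2+1) = 8*B by rw [hB]; ring] at h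
    exact h
  have L1 : ltr (k+1) = [LkF (k+1)] := ltr_eq k
  have L2 : ltr (k+1+1) = [LkF (k+2)] := ltr_eq (k+1)
  rw [W1, W2, W3, L1, L2, z3, z1, z2]
  refine ⟨?_, ?_, ?_⟩
  · -- ===== Part 1 =====
    apply Set.ext
    intro ω
    rw [mem_cylF_iff]
    constructor
    · rintro ⟨hO, hm, hx⟩
      obtain ⟨t, hw⟩ := window ξ hξ ω hO (2*B) (4*B)
      have hkey : ∀ j, 1 ≤ j → j < 2 ^ (k+1) → g ((t + 2*B) + j) = g j := by
        intro j hj1 hj2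
        have h1 := hw (2*B + j) (by omega) (by omega)
        have h2 := hm j hj1 (by omega)
        have ec : ((2*B + j : ℕ) : ℤ) - ((2*B : ℕ) : ℤ) = (j : ℤ) := by push_cast; ring
        rw [ec, h2] at h1
        have ee : t + (2*B + j) = (t + 2*B) + j := by omega
        rw [ee] at h1
        exact h1.symm
      have hfin : g ((t + 2*B) + 2 ^ (k+1)) = LkF (k + 2) := by
        have h1 := hw (4*B) (by omega) (by omega)
        have ec : ((4*B : ℕ) : ℤ) - ((2*B : ℕ) : ℤ) = ((2*B - 1 : ℕ) : ℤ) + 1 := by omega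
        rw [ec, hx] at h1
        have ee : t + 4*B = (t + 2*B) + 2 ^ (k+1) := by omega
        rw [ee] at h1
        exact h1.symm
      obtain ⟨r, hro, hP⟩ := key1 k (t + 2*B) hkey hfin
      obtain ⟨s, hs⟩ : ∃ s, r = 2*s + 1 := ⟨r / 2, by omega⟩
      have hexp : 2^(k+1) * (2*s+1) = 2^(k+2) * s + 2*B := by rw [hB]; ring
      have ht' : t = 2^(k+2) * s := by rw [hs] at hP; omega
      refine ⟨shiftN (-(2*(B:ℤ))) ω, ?_, shift_shift _ _⟩
      rw [mem_cylF_iff]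
      refine ⟨omega_shift ξ _ ω hO, ?_, ?_⟩
      · intro i hi1 hi2
        show ω ((i:ℤ) + -(2*(B:ℤ))) = g i
        rcases le_or_gt i (2*B) with hc | hc
        · have h1 := hw i hi1 (by omega)
          have ec : (i:ℤ) + -(2*(B:ℤ)) = (i:ℤ) - ((2*B:ℕ):ℤ) := by push_cast; ring
          rw [ec, h1]
          exact per (t + i) i (k+2) s (by omega) hi1 (by omega)
        · have h2 := hm (i - 2*B) (by omega) (by omega)
          have ec : (i:ℤ) + -(2*(B:ℤ)) = ((i - 2*B : ℕ):ℤ) := by omega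
          rw [ec, h2]
          exact (per i (i - 2*B) (k+1) 1 (by omega) (by omega) (by omega)).symm
      · show ω (((4*B-1 : ℕ):ℤ) + 1 + -(2*(B:ℤ))) = LkF (k+2)
        have ec : ((4*B-1 : ℕ):ℤ) + 1 + -(2*(B:ℤ)) = ((2*B-1 : ℕ):ℤ) + 1 := by omega
        rw [ec]
        exact hx
    · rintro ⟨ω', hω', rfl⟩
      rw [mem_cylF_iff] at hω'
      obtain ⟨hO', hm', hx'⟩ := hω'
      refine ⟨omega_shift ξ _ ω' hO', ?_, ?_⟩
      · intro i hi1 hi2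
        show ω' ((i:ℤ) + 2*(B:ℤ)) = g i
        have h1 := hm' (i + 2*B) (by omega) (by omega)
        have ec : (i:ℤ) + 2*(B:ℤ) = ((i + 2*B : ℕ):ℤ) := by push_cast; ring
        rw [ec, h1]
        exact per (i + 2*B) i (k+1) 1 (by omega) hi1 (by omega)
      · show ω' (((2*B-1 : ℕ):ℤ) + 1 + 2*(B:ℤ)) = LkF (k+2)
        have ec : ((2*B-1 : ℕ):ℤ) + 1 + 2*(B:ℤ) = ((4*B-1 : ℕ):ℤ) + 1 := by omega
        rw [ec]
        exact hx'
  · -- ===== Part 2 =====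
    apply Set.ext
    intro ω
    rw [mem_cylF_iff]
    constructor
    · rintro ⟨hO, hm, hx⟩
      obtain ⟨t, hw⟩ := window ξ hξ ω hO (6*B) (10*B)
      have hkey : ∀ j, 1 ≤ j → j < 2 ^ (k+1+1) → g ((t + 6*B) + j) = g j := by
        intro j hj1 hj2
        have h1 := hw (6*B + j) (by omega) (by omega)
        have h2 := hm j hj1 (by omega)
        have ec : ((6*B + j : ℕ) : ℤ) - ((6*B : ℕ) : ℤ) = (j : ℤ) := by push_cast; ring
        rw [ec, h2] at h1
        have ee : t + (6*B + j) = (t + 6*B) + j := by omega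
        rw [ee] at h1
        exact h1.symm
      have hfin : g ((t + 6*B) + 2 ^ (k+1+1)) = LkF (k + 1) := by
        have h1 := hw (10*B) (by omega) (by omega)
        have ec : ((10*B : ℕ) : ℤ) - ((6*B : ℕ) : ℤ) = ((4*B - 1 : ℕ) : ℤ) + 1 := by omega
        rw [ec, hx] at h1
        have ee : t + 10*B = (t + 6*B) + 2 ^ (k+1+1) := by omega
        rw [ee] at h1
        exact h1.symm
      rcases key2 (k+1) (t + 6*B) hkey hfin with ⟨r, hr4, hP⟩ | ⟨s, hP⟩
      · apply Set.mem_union_left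
        obtain ⟨u, hu⟩ : ∃ u, r = 4*u + 3 := ⟨r / 4, by omega⟩
        have hexp : 2^(k+1+1) * (4*u+3) = 2^(k+3) * (2*u+1) + 4*B := by rw [hB]; ring
        have ht2 : t + 2*B = 2^(k+3) * (2*u+1) := by rw [hu] at hP; omega
        refine ⟨shiftN (-(4*(B:ℤ))) ω, ?_, shift_shift _ _⟩
        rw [mem_cylF_iff]
        refine ⟨omega_shift ξ _ ω hO, ?_, ?_⟩
        · intro i hi1 hi2
          show ω ((i:ℤ) + -(4*(B:ℤ))) = g i
          rcases le_or_gt i (4*B) with hc | hc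
          · have h1 := hw (i + 2*B) (by omega) (by omega)
            have ec : (i:ℤ) + -(4*(B:ℤ)) = ((i + 2*B : ℕ):ℤ) - ((6*B:ℕ):ℤ) := by
              push_cast; ring
            rw [ec, h1]
            exact per (t + (i + 2*B)) i (k+3) (2*u+1) (by omega) hi1 (by omega)
          · have h2 := hm (i - 4*B) (by omega) (by omega)
            have ec : (i:ℤ) + -(4*(B:ℤ)) = ((i - 4*B : ℕ):ℤ) := by omega
            rw [ec, h2]
            exact (per i (i - 4*B) (k+1+1) 1 (by omega) (by omega) (by omega)).symm
        · show ω (((8*B-1 : ℕ):ℤ) + 1 + -(4*(B:ℤ))) = LkF (k+1)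
          have ec : ((8*B-1 : ℕ):ℤ) + 1 + -(4*(B:ℤ)) = ((4*B-1 : ℕ):ℤ) + 1 := by omega
          rw [ec]
          exact hx
      · apply Set.mem_union_right
        have hexp : 2^(k+1) * (8*s+7) = 2^(k+3) * (2*s+1) + 6*B := by rw [hB]; ring
        have ht2 : t = 2^(k+3) * (2*s+1) := by omega
        refine ⟨shiftN (-(6*(B:ℤ))) ω, ?_, shift_shift _ _⟩
        rw [mem_cylF_iff]
        refine ⟨omega_shift ξ _ ω hO, ?_, ?_⟩
        · intro i hi1 hi2
          show ω ((i:ℤ) + -(6*(B:ℤ))) = g i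
          rcases le_or_gt i (6*B) with hc | hc
          · have h1 := hw i hi1 (by omega)
            have ec : (i:ℤ) + -(6*(B:ℤ)) = (i:ℤ) - ((6*B:ℕ):ℤ) := by push_cast; ring
            rw [ec, h1]
            exact per (t + i) i (k+3) (2*s+1) (by omega) hi1 (by omega)
          · have h2 := hm (i - 6*B) (by omega) (by omega)
            have ec : (i:ℤ) + -(6*(B:ℤ)) = ((i - 6*B : ℕ):ℤ) := by omega
            rw [ec, h2]
            exact (per i (i - 6*B) (k+1) 3 (by omega) (by omega) (by omega)).symm
        · show ω (((8*B-1 : ℕ):ℤ) + 1 + -(6*(B:ℤ))) = LkF (k+1)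
          have ec : ((8*B-1 : ℕ):ℤ) + 1 + -(6*(B:ℤ)) = ((2*B : ℕ):ℤ) := by omega
          rw [ec]
          have h2 := hm (2*B) (by omega) (by omega)
          rw [h2]
          have hg := g_pow (k+1) 1 (by norm_num)
          rw [mul_one] at hg
          rw [show 2*B = 2^(k+1) by omega]
          exact hg
    · intro hmem
      rw [Set.mem_union] at hmem
      rcases hmem with ⟨ω', hω', rfl⟩ | ⟨ω', hω', rfl⟩
      · rw [mem_cylF_iff] at hω'
        obtain ⟨hO', hm', hx'⟩ := hω'
        refine ⟨omega_shift ξ _ ω' hO', ?_, ?_⟩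
        · intro i hi1 hi2
          show ω' ((i:ℤ) + 4*(B:ℤ)) = g i
          have h1 := hm' (i + 4*B) (by omega) (by omega)
          have ec : (i:ℤ) + 4*(B:ℤ) = ((i + 4*B : ℕ):ℤ) := by push_cast; ring
          rw [ec, h1]
          exact per (i + 4*B) i (k+1+1) 1 (by omega) hi1 (by omega)
        · show ω' (((4*B-1 : ℕ):ℤ) + 1 + 4*(B:ℤ)) = LkF (k+1)
          have ec : ((4*B-1 : ℕ):ℤ) + 1 + 4*(B:ℤ) = ((8*B-1 : ℕ):ℤ) + 1 := by omega
          rw [ec]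
          exact hx'
      · rw [mem_cylF_iff] at hω'
        obtain ⟨hO', hm', hx'⟩ := hω'
        obtain ⟨t, hw⟩ := window ξ hξ ω' hO' 0 (12*B)
        have hww : ∀ j, 1 ≤ j → j ≤ 12*B → ω' (j:ℤ) = g (t + j) := by
          intro j h1 h2
          have h3 := hw j h1 h2
          have ec : (j:ℤ) - ((0:ℕ):ℤ) = (j:ℤ) := by omega
          rw [ec] at h3
          exact h3
        have hkey : ∀ j, 1 ≤ j → j < 2 ^ (k+1+2) → g (t + j) = g j := by
          intro j h1 h2
          rw [← hww j h1 (by omega)]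
          exact hm' j h1 (by omega)
        have hfin : g (t + 2 ^ (k+1+2)) = LkF (k+1) := by
          have h3 := hww (8*B) (by omega) (by omega)
          have ec : ((8*B:ℕ):ℤ) = ((8*B-1 : ℕ):ℤ) + 1 := by omega
          rw [ec, hx'] at h3
          rw [show t + 2^(k+1+2) = t + 8*B by omega]
          exact h3.symm
        have K3 := key3 (k+1) t hkey hfin
        refine ⟨omega_shift ξ _ ω' hO', ?_, ?_⟩
        · intro i hi1 hi2
          show ω' ((i:ℤ) + 6*(B:ℤ)) = g i
          have ec : (i:ℤ) + 6*(B:ℤ) = ((i + 6*B : ℕ):ℤ) := by push_cast; ring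
          rw [ec]
          rcases Nat.lt_or_ge (i + 6*B) (8*B) with hc | hc
          · have h1 := hm' (i + 6*B) (by omega) (by omega)
            rw [h1]
            exact per (i + 6*B) i (k+1) 3 (by omega) hi1 (by omega)
          · rcases Nat.eq_or_lt_of_le hc with hc2 | hc2
            · rw [show ((i + 6*B : ℕ):ℤ) = ((8*B - 1:ℕ):ℤ) + 1 by omega, hx']
              have hg := g_pow (k+1) 1 (by norm_num)
              rw [mul_one] at hg
              rw [show i = 2^(k+1) by omega]
              exact hg.symm
            · have h1 := hww (i + 6*B) (by omega) (by omega)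
              rw [h1]
              have h4 := K3 (i + 6*B - 8*B) (by omega) (by omega)
              rw [show t + 2^(k+1+2) + (i + 6*B - 8*B) = t + (i + 6*B) by omega] at h4
              rw [h4]
              exact (per i (i + 6*B - 8*B) (k+1) 1 (by omega) (by omega) (by omega)).symm
        · show ω' (((4*B-1 : ℕ):ℤ) + 1 + 6*(B:ℤ)) = LkF (k+1)
          have ec : ((4*B-1 : ℕ):ℤ) + 1 + 6*(B:ℤ) = ((10*B : ℕ):ℤ) := by omega
          rw [ec]
          have h1 := hww (10*B) (by omega) (by omega)
          rw [h1]
          have h4 := K3 (2*B) (by omega) (by omega)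
          rw [show t + 2^(k+1+2) + 2*B = t + 10*B by omega] at h4
          rw [h4]
          have hg := g_pow (k+1) 1 (by norm_num)
          rw [mul_one] at hg
          rw [show 2*B = 2^(k+1) by omega]
          exact hg
  · -- ===== Part 3 : disjointness =====
    rw [Set.disjoint_left]
    rintro ω ⟨ω₁, h1, rfl⟩ ⟨ω₂, h2, heq⟩
    rw [mem_cylF_iff] at h1 h2
    obtain ⟨-, hm1, -⟩ := h1
    obtain ⟨-, hm2, -⟩ := h2
    have hv1 : shiftN (4*(B:ℤ)) ω₁ 0 = LkF (k+2) := by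
      show ω₁ ((0:ℤ) + 4*(B:ℤ)) = LkF (k+2)
      have h3 := hm1 (4*B) (by omega) (by omega)
      have ec : (0:ℤ) + 4*(B:ℤ) = ((4*B:ℕ):ℤ) := by push_cast; ring
      rw [ec, h3]
      have hg := g_pow (k+2) 1 (by norm_num)
      rw [mul_one] at hg
      rw [show 4*B = 2^(k+2) by omega]
      exact hg
    have hv2 : shiftN (6*(B:ℤ)) ω₂ 0 = LkF (k+1) := by
      show ω₂ ((0:ℤ) + 6*(B:ℤ)) = LkF (k+1)
      have h3 := hm2 (6*B) (by omega) (by omega)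
      have ec : (0:ℤ) + 6*(B:ℤ) = ((6*B:ℕ):ℤ) := by push_cast; ring
      rw [ec, h3]
      rw [show 6*B = 2^(k+1)*3 by omega]
      exact g_pow (k+1) 3 (by norm_num)
    rw [heq, hv1] at hv2
    exact LkF_ne_succ (k+1) hv2
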